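/- Let k ≥ 1 and let 2 ≤ n ≤ m. Let ι : B_n → B_m be the group homomorphism defined on the presented group B_n by ι(σ_i) = σ_i for all 1 ≤ i ≤ n−1. Then ι maps Γ_k(P_n) into Γ_k(P_m), and the induced homomorphism ῑ : B_n/Γ_k(P_n) → B_m/Γ_k(P_m) is injective. -/

import Mathlib

namespace BraidProj

/-- The commutation relator `σᵢσⱼσᵢ⁻¹σⱼ⁻¹` in the free group. -/
def σrel1 {m : ℕ} (i j : Fin m) : FreeGroup (Fin m) :=
  .of i * .of j * (.of i)⁻¹ * (.of j)⁻¹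

/-- The braid relator `σᵢσⱼσᵢ(σⱼσᵢσⱼ)⁻¹` in the free group. -/
def σrel2 {m : ℕ} (i j : Fin m) : FreeGroup (Fin m) :=
  .of i * .of j * .of i * (.of j * .of i * .of j)⁻¹

/-- The braid relations for the Artin braid group on `n` strings:
generators `σ_1, …, σ_{n-1}` are indexed (0-based) by `Fin (n-1)`. -/
def braidRels (n : ℕ) : Set (FreeGroup (Fin (n - 1))) :=
  {r | (∃ i j : Fin (n - 1), (i : ℕ) + 2 ≤ (j : ℕ) ∧ r = σrel1 i j) ∨
       (∃ i j : Fin (n - 1), (i : ℕ) + 1 = (j : ℕ) ∧ r = σrel2 i j)}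

/-- The Artin braid group `B_n` on `n` strings, as a presented group. -/
abbrev B (n : ℕ) : Type := PresentedGroup (braidRels n)

/-- The `i`-th Artin generator (0-based), with junk value `1` if out of range. -/
def braidGen (n : ℕ) (i : ℕ) : B n :=
  if h : i < n - 1 then PresentedGroup.of ⟨i, h⟩ else 1

/-- The transposition `(i, i+1)` (0-based) in `S_n`, the image of the Artin
generator `σ` indexed by `i : Fin (n-1)`. -/
def permGen (n : ℕ) (i : Fin (n - 1)) : Equiv.Perm (Fin n) :=
  Equiv.swap ⟨(i : ℕ), by have := i.isLt; omega⟩ ⟨(i : ℕ) + 1, by have := i.isLt; omega⟩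

lemma swap_commute_of {α : Type*} [DecidableEq α] {a b c d : α}
    (hac : a ≠ c) (had : a ≠ d) (hbc : b ≠ c) (hbd : b ≠ d) :
    Commute (Equiv.swap a b) (Equiv.swap c d) := by
  apply Equiv.Perm.Disjoint.commute
  intro x
  by_cases hxa : x = a
  · subst hxa; right; exact Equiv.swap_apply_of_ne_of_ne hac had
  by_cases hxb : x = b
  · subst hxb; right; exact Equiv.swap_apply_of_ne_of_ne hbc hbd
  · left; exact Equiv.swap_apply_of_ne_of_ne hxa hxb

lemma swap_braid {α : Type*} [DecidableEq α] {a b c : α}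
    (hab : a ≠ b) (hbc : b ≠ c) (hac : a ≠ c) :
    Equiv.swap a b * Equiv.swap b c * Equiv.swap a b =
      Equiv.swap b c * Equiv.swap a b * Equiv.swap b c := by
  ext x
  simp only [Equiv.Perm.mul_apply]
  by_cases hxa : x = a
  · subst hxa
    simp [Equiv.swap_apply_left, Equiv.swap_apply_right,
      Equiv.swap_apply_of_ne_of_ne, hab, hbc, hac, hab.symm, hbc.symm, hac.symm]
  by_cases hxb : x = b
  · subst hxb
    simp [Equiv.swap_apply_left, Equiv.swap_apply_right,
      Equiv.swap_apply_of_ne_of_ne, hab, hbc, hac, hab.symm, hbc.symm, hac.symm]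
  by_cases hxc : x = c
  · subst hxc
    simp [Equiv.swap_apply_left, Equiv.swap_apply_right,
      Equiv.swap_apply_of_ne_of_ne, hab, hbc, hac, hab.symm, hbc.symm, hac.symm]
  · simp [Equiv.swap_apply_of_ne_of_ne, hxa, hxb, hxc]

lemma braidRels_hold (n : ℕ) :
    ∀ r ∈ braidRels n, FreeGroup.lift (permGen n) r = 1 := by
  rintro r (⟨i, j, hij, rfl⟩ | ⟨i, j, hij, rfl⟩) <;>
    simp only [σrel1, σrel2, map_mul, map_inv, FreeGroup.lift_apply_of]
  · have hi := i.isLt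
    have hj := j.isLt
    have hcomm : Commute (permGen n i) (permGen n j) := by
      apply swap_commute_of <;> · simp only [ne_eq, Fin.mk.injEq]; omega
    have : permGen n i * permGen n j * (permGen n i)⁻¹ * (permGen n j)⁻¹ = 1 := by
      rw [hcomm.eq]; group
    exact this
  · have hi := i.isLt
    have hj := j.isLt
    have h2 : permGen n j =
        Equiv.swap ⟨(i : ℕ) + 1, by omega⟩ ⟨(i : ℕ) + 2, by omega⟩ := by
      unfold permGen
      congr 1 <;> · simp only [Fin.mk.injEq]; omega
    have h1 : permGen n i =
        Equiv.swap (⟨(i : ℕ), by omega⟩ : Fin n) ⟨(i : ℕ) + 1, by omega⟩ := rfl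
    rw [h1, h2, mul_inv_eq_one]
    apply swap_braid <;> · simp only [ne_eq, Fin.mk.injEq]; omega

/-- The canonical projection `σ : B_n → S_n` sending `σᵢ` to the
transposition `(i, i+1)`. -/
def braidπ (n : ℕ) : B n →* Equiv.Perm (Fin n) :=
  PresentedGroup.toGroup (braidRels_hold n)

/-- The pure braid group `P_n`, the kernel of `σ : B_n → S_n`. -/
def P (n : ℕ) : Subgroup (B n) := (braidπ n).ker

instance P_normal (n : ℕ) : (P n).Normal := MonoidHom.normal_ker _

/-- `Γ_k(P_n)`, the `k`-th term of the lower central series of the pure braid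
group (with `Γ_1(P_n) = P_n`), viewed as a subgroup of `B_n`. -/
def gammaB (n k : ℕ) : Subgroup (B n) :=
  ((⊤ : Subgroup (P n)).lowerCentralSeries (k - 1)).map (P n).subtype

instance gammaB_normal (n k : ℕ) : (gammaB n k).Normal := by
  constructor
  rintro x ⟨y, hy, rfl⟩ g
  let f : P n →* P n := (MulAut.conjNormal g).toMonoidHom
  have hmem : f y ∈ (⊤ : Subgroup (P n)).lowerCentralSeries (k - 1) :=
    Subgroup.lowerCentralSeries.map f (k - 1) (Subgroup.mem_map_of_mem f hy)
  refine ⟨f y, hmem, ?_⟩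
  simp [f, MulAut.conjNormal_apply]

lemma gammaB_le_P (n k : ℕ) : gammaB n k ≤ P n := Subgroup.map_subtype_le _

/-- The homomorphism `σ̄ : B_n/Γ_k(P_n) → S_n` induced by `σ`. -/
def braidπbar (n k : ℕ) : B n ⧸ gammaB n k →* Equiv.Perm (Fin n) :=
  QuotientGroup.lift _ (braidπ n)
    (fun x hx => MonoidHom.mem_ker.mp (gammaB_le_P n k hx))

/-- The word `σ_{j-1} ⋯ σ_{i+1}` (paper 1-based indices). -/
def braidChain (n i j : ℕ) : B n :=
  ((List.range (j - 1 - i)).map (fun t => braidGen n (j - 2 - t))).prod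

/-- The standard pure braid generator `A_{i,j} = σ_{j-1}⋯σ_{i+1} σ_i² σ_{i+1}⁻¹⋯σ_{j-1}⁻¹`
(paper 1-based indices, `1 ≤ i < j ≤ n`). -/
def braidA (n i j : ℕ) : B n :=
  braidChain n i j * (braidGen n (i - 1)) ^ 2 * (braidChain n i j)⁻¹

/-- `A_{i,j}` with the convention `A_{j,i} = A_{i,j}`. -/
def braidAsym (n i j : ℕ) : B n := if i ≤ j then braidA n i j else braidA n j i

end BraidProj


namespace BraidInj
open BraidProj Finset Equiv

lemma mk_rel_one {N : ℕ} {r : FreeGroup (Fin (N-1))} (hr : r ∈ braidRels N) :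
    (PresentedGroup.mk (braidRels N) r : B N) = 1 :=
  (QuotientGroup.eq_one_iff r).2 (Subgroup.subset_normalClosure hr)

lemma braidGen_eq_of {N a : ℕ} (h : a < N - 1) :
    braidGen N a = PresentedGroup.of (⟨a, h⟩ : Fin (N-1)) := by
  simp [braidGen, h]

lemma braidGen_comm {N a b : ℕ} (h : a + 2 ≤ b) :
    Commute (braidGen N a) (braidGen N b) := by
  by_cases hb : b < N - 1
  · have ha : a < N - 1 := by omega
    have h1 := mk_rel_one (N := N) (Or.inl ⟨⟨a, ha⟩, ⟨b, hb⟩, h, rfl⟩)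
    rw [σrel1] at h1
    simp only [map_mul, map_inv] at h1
    rw [braidGen_eq_of ha, braidGen_eq_of hb]
    rw [mul_inv_eq_one, mul_inv_eq_iff_eq_mul] at h1
    exact h1
  · rw [show braidGen N b = 1 by simp [braidGen, hb]]
    exact Commute.one_right _

lemma braidGen_braid {N a : ℕ} (h : a + 2 ≤ N - 1) :
    braidGen N a * braidGen N (a+1) * braidGen N a
      = braidGen N (a+1) * braidGen N a * braidGen N (a+1) := by
  have ha : a < N - 1 := by omega
  have hb : a + 1 < N - 1 := by omega
  have h1 := mk_rel_one (N := N) (Or.inr ⟨⟨a, ha⟩, ⟨a+1, hb⟩, rfl, rfl⟩)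
  rw [σrel2] at h1
  simp only [map_mul, map_inv] at h1
  rw [mul_inv_eq_one] at h1
  rw [braidGen_eq_of ha, braidGen_eq_of hb]
  exact h1

end BraidInj
namespace BraidInj
open BraidProj Finset Equiv

variable {m : ℕ}

/-- The rank of `a` in `S` : the number of elements of `S` smaller than `a`. -/
def rk (S : Finset (Fin m)) (a : Fin m) : ℕ := (S.filter (· < a)).card

lemma mem_swap_map {S : Finset (Fin m)} {a b x : Fin m} :
    x ∈ S.map (Equiv.swap a b).toEmbedding ↔ Equiv.swap a b x ∈ S := by
  rw [Finset.mem_map_equiv, Equiv.symm_swap]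

lemma rk_map {S : Finset (Fin m)} {e : Equiv.Perm (Fin m)} {a : Fin m}
    (h : ∀ x, e x < a ↔ x < a) :
    rk (S.map e.toEmbedding) a = rk S a := by
  unfold rk
  rw [Finset.filter_map, Finset.card_map]
  congr 1
  apply Finset.filter_congr
  intro x _
  simpa using h x

lemma rk_adj {S : Finset (Fin m)} {a b : Fin m} (hab : (b : ℕ) = (a : ℕ) + 1) :
    rk S b = rk S a + (if a ∈ S then 1 else 0) := by
  unfold rk
  have hfil : S.filter (· < b) = if a ∈ S then insert a (S.filter (· < a)) else S.filter (· < a) := by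
    by_cases ha : a ∈ S <;> simp only [ha, if_true, if_false] <;> ext x <;>
      simp only [Finset.mem_filter, Finset.mem_insert, Fin.lt_def] <;>
      constructor
    · rintro ⟨hxS, hxb⟩
      by_cases hxa : (x : ℕ) = (a : ℕ)
      · exact Or.inl (Fin.ext hxa)
      · exact Or.inr ⟨hxS, by omega⟩
    · rintro (rfl | ⟨hxS, hxa⟩)
      · exact ⟨ha, by omega⟩
      · exact ⟨hxS, by omega⟩
    · rintro ⟨hxS, hxb⟩
      refine ⟨hxS, ?_⟩
      have : (x : ℕ) ≠ (a : ℕ) := fun hx => ha (by rwa [show x = a from Fin.ext hx] at hxS)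
      omega
    · rintro ⟨hxS, hxa⟩
      exact ⟨hxS, by omega⟩
  rw [hfil]
  by_cases ha : a ∈ S <;> simp only [ha, if_true, if_false]
  · rw [Finset.card_insert_of_notMem (by simp)]
  · rfl

lemma rk_lt_card {S : Finset (Fin m)} {a : Fin m} (ha : a ∈ S) : rk S a < S.card := by
  apply Finset.card_lt_card
  refine ⟨Finset.filter_subset _ _, fun hsub => ?_⟩
  have := hsub ha
  simp at this

lemma rk_pair {S : Finset (Fin m)} {a b : Fin m} (ha : a ∈ S) (hb : b ∈ S) (hab : a < b) :
    rk S a + 2 ≤ S.card := by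
  have hbf : b ∉ S.filter (· < a) := by simp [not_lt.2 hab.le]
  have haf : a ∉ insert b (S.filter (· < a)) := by simp [(ne_of_lt hab)]
  have hsub : insert a (insert b (S.filter (· < a))) ⊆ S := by
    intro x hx
    simp only [Finset.mem_insert, Finset.mem_filter] at hx
    rcases hx with rfl | rfl | ⟨h1, _⟩ <;> assumption
  calc rk S a + 2 = (insert a (insert b (S.filter (· < a)))).card := by
        rw [Finset.card_insert_of_notMem haf, Finset.card_insert_of_notMem hbf]; rfl
    _ ≤ S.card := Finset.card_le_card hsub

lemma rk_lt_rk {S : Finset (Fin m)} {a b c : Fin m} (ha : a ∈ S) (hb : b ∈ S)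
    (hab : a < b) (hbc : b < c) : rk S a + 2 ≤ rk S c := by
  have hbf : b ∉ S.filter (· < a) := by simp [not_lt.2 hab.le]
  have haf : a ∉ insert b (S.filter (· < a)) := by simp [(ne_of_lt hab)]
  have hsub : insert a (insert b (S.filter (· < a))) ⊆ S.filter (· < c) := by
    intro x hx
    simp only [Finset.mem_insert, Finset.mem_filter] at hx ⊢
    rcases hx with rfl | rfl | ⟨h1, h2⟩
    · exact ⟨ha, hab.trans hbc⟩
    · exact ⟨hb, hbc⟩
    · exact ⟨h1, h2.trans (hab.trans hbc)⟩
  calc rk S a + 2 = (insert a (insert b (S.filter (· < a)))).card := by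
        rw [Finset.card_insert_of_notMem haf, Finset.card_insert_of_notMem hbf]; rfl
    _ ≤ (S.filter (· < c)).card := Finset.card_le_card hsub

lemma rk_triple {S : Finset (Fin m)} {a b c : Fin m} (ha : a ∈ S) (hb : b ∈ S) (hc : c ∈ S)
    (hab : a < b) (hbc : b < c) : rk S a + 3 ≤ S.card := by
  have := rk_lt_rk ha hb hab hbc
  have := rk_lt_card hc
  have : rk S c + 1 ≤ S.card := rk_lt_card hc
  omega

end BraidInj
namespace BraidInj
open BraidProj Finset Equiv

/-- The type of `n`-element subsets of `Fin m`. -/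
def X (n m : ℕ) : Type := {S : Finset (Fin m) // S.card = n}

/-- The action of permutations of `Fin m` on `n`-element subsets. -/
def permX (n m : ℕ) : Equiv.Perm (Fin m) →* Equiv.Perm (X n m) where
  toFun p :=
    { toFun := fun S => ⟨S.1.map p.toEmbedding, by rw [Finset.card_map]; exact S.2⟩
      invFun := fun S => ⟨S.1.map p.symm.toEmbedding, by rw [Finset.card_map]; exact S.2⟩
      left_inv := fun S => Subtype.ext (by ext x; simp [Finset.mem_map_equiv])
      right_inv := fun S => Subtype.ext (by ext x; simp [Finset.mem_map_equiv]) }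
  map_one' := by
    apply Equiv.ext; intro S; apply Subtype.ext
    show S.1.map _ = S.1
    ext x; simp [Finset.mem_map_equiv, Equiv.Perm.one_symm]
  map_mul' p q := by
    apply Equiv.ext; intro S; apply Subtype.ext
    show S.1.map _ = (S.1.map q.toEmbedding).map p.toEmbedding
    ext x
    rw [Finset.mem_map_equiv, Finset.mem_map_equiv, Finset.mem_map_equiv,
      show (Equiv.symm (p*q)) x = Equiv.symm q (Equiv.symm p x) from by
        simp [Equiv.Perm.mul_def]]

lemma permX_coe (n m : ℕ) (p : Equiv.Perm (Fin m)) (S : X n m) :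
    (permX n m p S).1 = S.1.map p.toEmbedding := rfl

/-- Precomposition action of permutations of `X` on functions `X → Q`. -/
def permArrow {Y : Type*} {Q : Type*} [Group Q] : Equiv.Perm Y →* MulAut (Y → Q) where
  toFun p :=
    { toFun := fun f => f ∘ p.symm
      invFun := fun f => f ∘ p
      left_inv := fun f => by funext x; simp
      right_inv := fun f => by funext x; simp
      map_mul' := fun f g => rfl }
  map_one' := by apply MulEquiv.ext; intro f; funext x; simp [Equiv.Perm.one_symm]
  map_mul' p q := by apply MulEquiv.ext; intro f; funext x; rfl

/-- The wreath-like group receiving the braid group. -/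
abbrev WW (n m k : ℕ) : Type :=
  (X n m → B n ⧸ gammaB n k) ⋊[permArrow] Equiv.Perm (X n m)

/-- Image of the Artin generators in the quotient. -/
def Qg (n k : ℕ) (r : ℕ) : B n ⧸ gammaB n k := QuotientGroup.mk (braidGen n r)

lemma Qg_comm {n k a b : ℕ} (h : a + 2 ≤ b) : Commute (Qg n k a) (Qg n k b) := by
  have := Commute.map (braidGen_comm (N := n) h) (QuotientGroup.mk' (gammaB n k))
  simpa [Qg] using this

lemma Qg_braid {n k a : ℕ} (h : a + 2 ≤ n - 1) :
    Qg n k a * Qg n k (a+1) * Qg n k a = Qg n k (a+1) * Qg n k a * Qg n k (a+1) := by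
  have := braidGen_braid (N := n) h
  have := congrArg (QuotientGroup.mk' (gammaB n k)) this
  simpa [Qg] using this

variable {m : ℕ}

/-- first strand position of generator `i`. -/
def aF {m : ℕ} (i : Fin (m-1)) : Fin m := ⟨(i : ℕ), by have := i.isLt; omega⟩
/-- second strand position of generator `i`. -/
def bF {m : ℕ} (i : Fin (m-1)) : Fin m := ⟨(i : ℕ) + 1, by have := i.isLt; omega⟩

/-- The left ("decoration") component of the image of the generator `σᵢ`. -/
def fgen (n : ℕ) {m : ℕ} (k : ℕ) (i : Fin (m-1)) : X n m → B n ⧸ gammaB n k := fun S =>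
  if aF i ∈ S.1 ∧ bF i ∈ S.1 then Qg n k (rk S.1 (aF i)) else 1

/-- The image of the generator `σᵢ` in the wreath-like group. -/
def wgen (n : ℕ) {m : ℕ} (k : ℕ) (i : Fin (m-1)) : WW n m k :=
  ⟨fgen n k i, permX n m (permGen m i)⟩

lemma permGen_eq_swap (i : Fin (m-1)) : permGen m i = Equiv.swap (aF i) (bF i) := rfl

end BraidInj
namespace BraidInj
open BraidProj Finset Equiv

variable {m : ℕ}

lemma sdp_eq {N G : Type*} [Group N] [Group G] {φ : G →* MulAut N} {x y : N ⋊[φ] G}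
    (h1 : x.left = y.left) (h2 : x.right = y.right) : x = y := by
  cases x; cases y; cases h1; cases h2; rfl

lemma permArrow_apply {Y Q : Type*} [Group Q] (p : Equiv.Perm Y) (f : Y → Q) (y : Y) :
    permArrow p f y = f (p.symm y) := rfl

lemma perm_mul_symm {Y : Type*} (p q : Equiv.Perm Y) (y : Y) :
    (p * q).symm y = q.symm (p.symm y) := by simp [Equiv.Perm.mul_def]

lemma permX_symm_swap (n : ℕ) (a b : Fin m) (S : X n m) :
    ((permX n m (Equiv.swap a b)).symm S).1 = S.1.map (Equiv.swap a b).toEmbedding := by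
  show S.1.map (Equiv.swap a b).symm.toEmbedding = _
  rw [Equiv.symm_swap]

lemma fgen_apply (n k : ℕ) (i : Fin (m-1)) (S : X n m) :
    fgen n k i S = if aF i ∈ S.1 ∧ bF i ∈ S.1 then Qg n k (rk S.1 (aF i)) else 1 := rfl

lemma wgen_left (n k : ℕ) (i : Fin (m-1)) : (wgen n k i).left = fgen n k i := rfl
lemma wgen_right (n k : ℕ) (i : Fin (m-1)) :
    (wgen n k i).right = permX n m (permGen m i) := rfl

lemma swap_lt_iff {a b c : Fin m} (h : a < c ↔ b < c) (x : Fin m) :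
    Equiv.swap a b x < c ↔ x < c := by
  by_cases hxa : x = a
  · subst hxa; rw [Equiv.swap_apply_left]; exact h.symm
  by_cases hxb : x = b
  · subst hxb; rw [Equiv.swap_apply_right]; exact h
  · rw [Equiv.swap_apply_of_ne_of_ne hxa hxb]

lemma wgen_comm_rel {n k : ℕ} (i j : Fin (m-1)) (hij : (i:ℕ) + 2 ≤ (j:ℕ)) :
    wgen n k i * wgen n k j = wgen n k j * wgen n k i := by
  have hj := j.isLt
  have hi := i.isLt
  have hac : aF i < aF j := by rw [Fin.lt_def]; show (i:ℕ) < (j:ℕ); omega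
  have hbc : bF i < aF j := by rw [Fin.lt_def]; show (i:ℕ)+1 < (j:ℕ); omega
  have had : aF i < bF j := by rw [Fin.lt_def]; show (i:ℕ) < (j:ℕ)+1; omega
  have hbd : bF i < bF j := by rw [Fin.lt_def]; show (i:ℕ)+1 < (j:ℕ)+1; omega
  have hab : aF i < bF i := by rw [Fin.lt_def]; show (i:ℕ) < (i:ℕ)+1; omega
  apply sdp_eq
  · rw [SemidirectProduct.mul_left, SemidirectProduct.mul_left, wgen_left, wgen_right]
    rw [wgen_left, wgen_right]
    funext S
    simp only [Pi.mul_apply, permArrow_apply]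
    have hfj : fgen n k j ((permX n m (permGen m i)).symm S) = fgen n k j S := by
      rw [fgen_apply, fgen_apply, permGen_eq_swap, permX_symm_swap]
      have h1 : aF j ∈ S.1.map (Equiv.swap (aF i) (bF i)).toEmbedding ↔ aF j ∈ S.1 := by
        rw [mem_swap_map, Equiv.swap_apply_of_ne_of_ne hac.ne' hbc.ne']
      have h2 : bF j ∈ S.1.map (Equiv.swap (aF i) (bF i)).toEmbedding ↔ bF j ∈ S.1 := by
        rw [mem_swap_map, Equiv.swap_apply_of_ne_of_ne had.ne' hbd.ne']
      have h3 : rk (S.1.map (Equiv.swap (aF i) (bF i)).toEmbedding) (aF j) = rk S.1 (aF j) :=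
        rk_map (swap_lt_iff (iff_of_true hac hbc))
      simp only [h1, h2, h3]
    have hfi : fgen n k i ((permX n m (permGen m j)).symm S) = fgen n k i S := by
      rw [fgen_apply, fgen_apply, permGen_eq_swap, permX_symm_swap]
      have h1 : aF i ∈ S.1.map (Equiv.swap (aF j) (bF j)).toEmbedding ↔ aF i ∈ S.1 := by
        rw [mem_swap_map, Equiv.swap_apply_of_ne_of_ne hac.ne had.ne]
      have h2 : bF i ∈ S.1.map (Equiv.swap (aF j) (bF j)).toEmbedding ↔ bF i ∈ S.1 := by
        rw [mem_swap_map, Equiv.swap_apply_of_ne_of_ne hbc.ne hbd.ne]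
      have h3 : rk (S.1.map (Equiv.swap (aF j) (bF j)).toEmbedding) (aF i) = rk S.1 (aF i) :=
        rk_map (swap_lt_iff (iff_of_false (not_lt.2 hac.le) (not_lt.2 had.le)))
      simp only [h1, h2, h3]
    rw [hfj, hfi, fgen_apply, fgen_apply]
    by_cases h1 : aF i ∈ S.1 ∧ bF i ∈ S.1
    · by_cases h2 : aF j ∈ S.1 ∧ bF j ∈ S.1
      · rw [if_pos h1, if_pos h2]
        exact (Qg_comm (rk_lt_rk h1.1 h1.2 hab hbc)).eq
      · rw [if_neg h2, mul_one, one_mul]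
    · rw [if_neg h1, mul_one, one_mul]
  · rw [SemidirectProduct.mul_right, SemidirectProduct.mul_right, wgen_right, wgen_right]
    have hcomm : Commute (permGen m i) (permGen m j) := by
      rw [permGen_eq_swap, permGen_eq_swap]
      exact swap_commute_of hac.ne had.ne hbc.ne hbd.ne
    exact (hcomm.map (permX n m)).eq

end BraidInj
namespace BraidInj
open BraidProj Finset Equiv

variable {m : ℕ}

lemma wgen_braid_rel {n k : ℕ} (i j : Fin (m-1)) (hij : (i:ℕ) + 1 = (j:ℕ)) :
    wgen n k i * wgen n k j * wgen n k i = wgen n k j * wgen n k i * wgen n k j := by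
  have hi := i.isLt
  have hj := j.isLt
  have haj : aF j = bF i := Fin.ext (by show (j:ℕ) = (i:ℕ)+1; omega)
  have hab : aF i < bF i := by rw [Fin.lt_def]; show (i:ℕ) < (i:ℕ)+1; omega
  have hbc : bF i < bF j := by rw [Fin.lt_def]; show (i:ℕ)+1 < (j:ℕ)+1; omega
  have hac : aF i < bF j := hab.trans hbc
  apply sdp_eq
  · simp only [SemidirectProduct.mul_left, SemidirectProduct.mul_right, wgen_left, wgen_right]
    funext S
    simp only [Pi.mul_apply, permArrow_apply, perm_mul_symm]
    simp only [fgen_apply, permGen_eq_swap, haj, permX_symm_swap]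
    have hm1a : aF i ∈ S.1.map (Equiv.swap (aF i) (bF i)).toEmbedding ↔ bF i ∈ S.1 := by
      rw [mem_swap_map, Equiv.swap_apply_left]
    have hm1b : bF i ∈ S.1.map (Equiv.swap (aF i) (bF i)).toEmbedding ↔ aF i ∈ S.1 := by
      rw [mem_swap_map, Equiv.swap_apply_right]
    have hm1c : bF j ∈ S.1.map (Equiv.swap (aF i) (bF i)).toEmbedding ↔ bF j ∈ S.1 := by
      rw [mem_swap_map, Equiv.swap_apply_of_ne_of_ne hac.ne' hbc.ne']
    have hm2a : aF i ∈ S.1.map (Equiv.swap (bF i) (bF j)).toEmbedding ↔ aF i ∈ S.1 := by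
      rw [mem_swap_map, Equiv.swap_apply_of_ne_of_ne hab.ne hac.ne]
    have hm2b : bF i ∈ S.1.map (Equiv.swap (bF i) (bF j)).toEmbedding ↔ bF j ∈ S.1 := by
      rw [mem_swap_map, Equiv.swap_apply_left]
    have hm2c : bF j ∈ S.1.map (Equiv.swap (bF i) (bF j)).toEmbedding ↔ bF i ∈ S.1 := by
      rw [mem_swap_map, Equiv.swap_apply_right]
    have hm12a : aF i ∈ (S.1.map (Equiv.swap (aF i) (bF i)).toEmbedding).map
        (Equiv.swap (bF i) (bF j)).toEmbedding ↔ bF i ∈ S.1 := by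
      rw [mem_swap_map, Equiv.swap_apply_of_ne_of_ne hab.ne hac.ne, hm1a]
    have hm12b : bF i ∈ (S.1.map (Equiv.swap (aF i) (bF i)).toEmbedding).map
        (Equiv.swap (bF i) (bF j)).toEmbedding ↔ bF j ∈ S.1 := by
      rw [mem_swap_map, Equiv.swap_apply_left, hm1c]
    have hm21a : aF i ∈ (S.1.map (Equiv.swap (bF i) (bF j)).toEmbedding).map
        (Equiv.swap (aF i) (bF i)).toEmbedding ↔ bF j ∈ S.1 := by
      rw [mem_swap_map, Equiv.swap_apply_left, hm2b]
    have hm21b : bF i ∈ (S.1.map (Equiv.swap (bF i) (bF j)).toEmbedding).map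
        (Equiv.swap (aF i) (bF i)).toEmbedding ↔ aF i ∈ S.1 := by
      rw [mem_swap_map, Equiv.swap_apply_right, hm2a]
    have hm21c : bF j ∈ (S.1.map (Equiv.swap (bF i) (bF j)).toEmbedding).map
        (Equiv.swap (aF i) (bF i)).toEmbedding ↔ bF i ∈ S.1 := by
      rw [mem_swap_map, Equiv.swap_apply_of_ne_of_ne hac.ne' hbc.ne', hm2c]
    have hrkab : ∀ T : Finset (Fin m),
        rk (T.map (Equiv.swap (aF i) (bF i)).toEmbedding) (aF i) = rk T (aF i) :=
      fun T => rk_map (swap_lt_iff (iff_of_false (lt_irrefl _) (not_lt.2 hab.le)))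
    have hrkbc : ∀ T : Finset (Fin m),
        rk (T.map (Equiv.swap (bF i) (bF j)).toEmbedding) (aF i) = rk T (aF i) :=
      fun T => rk_map (swap_lt_iff (iff_of_false (not_lt.2 hab.le) (not_lt.2 hac.le)))
    have hvb : ((bF i : Fin m) : ℕ) = ((aF i : Fin m) : ℕ) + 1 := rfl
    by_cases ha : aF i ∈ S.1 <;> by_cases hb : bF i ∈ S.1 <;> by_cases hc : bF j ∈ S.1
    · -- TTT
      have e1 : rk S.1 (bF i) = rk S.1 (aF i) + 1 := by
        rw [rk_adj hvb, if_pos ha]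
      have e2 : rk (S.1.map (Equiv.swap (aF i) (bF i)).toEmbedding) (bF i)
          = rk S.1 (aF i) + 1 := by
        rw [rk_adj hvb, if_pos (hm1a.2 hb), hrkab]
      have e3 : rk ((S.1.map (Equiv.swap (bF i) (bF j)).toEmbedding).map
          (Equiv.swap (aF i) (bF i)).toEmbedding) (bF i) = rk S.1 (aF i) + 1 := by
        rw [rk_adj hvb, if_pos (hm21a.2 hc), hrkab, hrkbc]
      have e4 : rk ((S.1.map (Equiv.swap (aF i) (bF i)).toEmbedding).map
          (Equiv.swap (bF i) (bF j)).toEmbedding) (aF i) = rk S.1 (aF i) := by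
        rw [hrkbc, hrkab]
      simp only [ha, hb, hc, hm1a, hm1b, hm1c, hm2a, hm2b, hm2c, hm12a, hm12b, hm21a, hm21b,
        hm21c, and_self, if_true, e1, e2, e3, e4, hrkab, hrkbc]
      have hcard : rk S.1 (aF i) + 3 ≤ n := by
        have := rk_triple ha hb hc hab hbc
        rw [S.2] at this; exact this
      exact Qg_braid (by omega)
    · -- TTF
      have e3 : rk ((S.1.map (Equiv.swap (bF i) (bF j)).toEmbedding).map
          (Equiv.swap (aF i) (bF i)).toEmbedding) (bF i) = rk S.1 (aF i) := by
        rw [rk_adj hvb, if_neg (fun h => hc (hm21a.1 h)), hrkab, hrkbc, add_zero]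
      simp only [ha, hb, hc, hm1a, hm1b, hm1c, hm2a, hm2b, hm2c, hm12a, hm12b, hm21a, hm21b,
        hm21c, and_self, and_true, true_and, and_false, false_and, if_true, if_false, e3,
        one_mul, mul_one]
    · -- TFT
      have e2 : rk (S.1.map (Equiv.swap (aF i) (bF i)).toEmbedding) (bF i)
          = rk S.1 (aF i) := by
        rw [rk_adj hvb, if_neg (fun h => hb (hm1a.1 h)), hrkab, add_zero]
      simp only [ha, hb, hc, hm1a, hm1b, hm1c, hm2a, hm2b, hm2c, hm12a, hm12b, hm21a, hm21b,
        hm21c, and_self, and_true, true_and, and_false, false_and, if_true, if_false, e2,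
        hrkbc, one_mul, mul_one]
    · -- TFF
      simp only [ha, hb, hc, hm1a, hm1b, hm1c, hm2a, hm2b, hm2c, hm12a, hm12b, hm21a, hm21b,
        hm21c, and_self, and_true, true_and, and_false, false_and, if_true, if_false,
        one_mul, mul_one]
    · -- FTT
      have e1 : rk S.1 (bF i) = rk S.1 (aF i) := by
        rw [rk_adj hvb, if_neg ha, add_zero]
      have e4 : rk ((S.1.map (Equiv.swap (aF i) (bF i)).toEmbedding).map
          (Equiv.swap (bF i) (bF j)).toEmbedding) (aF i) = rk S.1 (aF i) := by
        rw [hrkbc, hrkab]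
      simp only [ha, hb, hc, hm1a, hm1b, hm1c, hm2a, hm2b, hm2c, hm12a, hm12b, hm21a, hm21b,
        hm21c, and_self, and_true, true_and, and_false, false_and, if_true, if_false, e1, e4,
        one_mul, mul_one]
    · -- FTF
      simp only [ha, hb, hc, hm1a, hm1b, hm1c, hm2a, hm2b, hm2c, hm12a, hm12b, hm21a, hm21b,
        hm21c, and_self, and_true, true_and, and_false, false_and, if_true, if_false,
        one_mul, mul_one]
    · -- FFT
      simp only [ha, hb, hc, hm1a, hm1b, hm1c, hm2a, hm2b, hm2c, hm12a, hm12b, hm21a, hm21b,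
        hm21c, and_self, and_true, true_and, and_false, false_and, if_true, if_false,
        one_mul, mul_one]
    · -- FFF
      simp only [ha, hb, hc, hm1a, hm1b, hm1c, hm2a, hm2b, hm2c, hm12a, hm12b, hm21a, hm21b,
        hm21c, and_self, and_true, true_and, and_false, false_and, if_true, if_false,
        one_mul, mul_one]
  · simp only [SemidirectProduct.mul_right, wgen_right]
    rw [permGen_eq_swap, permGen_eq_swap, haj]
    rw [← map_mul, ← map_mul, ← map_mul, ← map_mul]
    exact congrArg (permX n m) (swap_braid hab.ne hbc.ne hac.ne)

end BraidInj
namespace BraidInj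
open BraidProj Finset Equiv

/-- The wreath-type representation of the braid group `B m`. -/
def Phi (n m k : ℕ) : B m →* WW n m k :=
  PresentedGroup.toGroup (f := wgen n k) <| by
    rintro r (⟨i, j, hij, rfl⟩ | ⟨i, j, hij, rfl⟩) <;>
      simp only [σrel1, σrel2, map_mul, map_inv, FreeGroup.lift_apply_of]
    · rw [mul_inv_eq_one, mul_inv_eq_iff_eq_mul]
      exact wgen_comm_rel i j hij
    · rw [mul_inv_eq_one]
      exact wgen_braid_rel i j hij

lemma Phi_of (n m k : ℕ) (i : Fin (m-1)) :
    Phi n m k (PresentedGroup.of i) = wgen n k i :=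
  PresentedGroup.toGroup.of _

lemma braidpi_of (m : ℕ) (i : Fin (m-1)) : braidπ m (PresentedGroup.of i) = permGen m i :=
  PresentedGroup.toGroup.of _

lemma rightHom_Phi (n m k : ℕ) :
    SemidirectProduct.rightHom.comp (Phi n m k) = (permX n m).comp (braidπ m) := by
  apply PresentedGroup.ext
  intro i
  rw [MonoidHom.comp_apply, MonoidHom.comp_apply, Phi_of, braidpi_of]
  rfl

/-- The base point: the subset `{0, …, n-1}` of `Fin m`. -/
def S0 (n m : ℕ) (h : n ≤ m) : X n m :=
  ⟨(Finset.univ : Finset (Fin n)).map (Fin.castLEEmb h),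
    by rw [Finset.card_map, Finset.card_univ, Fintype.card_fin]⟩

lemma mem_S0 {n m : ℕ} (h : n ≤ m) (x : Fin m) : x ∈ (S0 n m h).1 ↔ (x:ℕ) < n := by
  simp only [S0, Finset.mem_map, Finset.mem_univ, true_and]
  constructor
  · rintro ⟨y, rfl⟩; exact y.isLt
  · intro hx; exact ⟨⟨(x:ℕ), hx⟩, by ext; rfl⟩

lemma rk_S0 {n m : ℕ} (h : n ≤ m) (a : Fin m) (ha : (a:ℕ) ≤ n) :
    rk (S0 n m h).1 a = (a:ℕ) := by
  unfold rk
  have hle : (a:ℕ) ≤ m := le_of_lt a.isLt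
  have hfil : (S0 n m h).1.filter (· < a)
      = (Finset.univ : Finset (Fin (a:ℕ))).map (Fin.castLEEmb hle) := by
    ext x
    simp only [Finset.mem_filter, mem_S0, Finset.mem_map, Finset.mem_univ, true_and]
    constructor
    · rintro ⟨hxn, hxa⟩
      exact ⟨⟨(x:ℕ), hxa⟩, by ext; rfl⟩
    · rintro ⟨y, rfl⟩
      have hy : ((Fin.castLEEmb hle y : Fin m) : ℕ) = (y:ℕ) := rfl
      have hlt : (y:ℕ) < (a:ℕ) := y.isLt
      exact ⟨by omega, by rw [Fin.lt_def, hy]; exact hlt⟩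
  rw [hfil, Finset.card_map, Finset.card_univ, Fintype.card_fin]

lemma swap_map_self {S : Finset (Fin m)} {a b : Fin m} (ha : a ∈ S) (hb : b ∈ S) :
    S.map (Equiv.swap a b).toEmbedding = S := by
  ext x
  rw [mem_swap_map]
  by_cases hxa : x = a
  · subst hxa; rw [Equiv.swap_apply_left]; exact iff_of_true hb ha
  by_cases hxb : x = b
  · subst hxb; rw [Equiv.swap_apply_right]; exact iff_of_true ha hb
  · rw [Equiv.swap_apply_of_ne_of_ne hxa hxb]

/-- The stabilizer of the base point in the wreath-like group. -/
def stab (n m k : ℕ) (h : n ≤ m) : Subgroup (WW n m k) where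
  carrier := {w | w.right (S0 n m h) = S0 n m h}
  one_mem' := rfl
  mul_mem' := by
    intro w1 w2 h1 h2
    show (w1.right * w2.right) (S0 n m h) = S0 n m h
    rw [Equiv.Perm.mul_apply, h2, h1]
  inv_mem' := by
    intro w hw
    show (w.right)⁻¹ (S0 n m h) = S0 n m h
    conv_lhs => rw [← hw]
    simp

lemma symm_S0 {n m k : ℕ} {h : n ≤ m} {w : WW n m k} (hw : w ∈ stab n m k h) :
    w.right.symm (S0 n m h) = S0 n m h := by
  conv_lhs => rw [← hw]
  simp

/-- Evaluation at the base point, on the stabilizer. -/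
def evS (n m k : ℕ) (h : n ≤ m) : stab n m k h →* (B n ⧸ gammaB n k) where
  toFun w := w.1.left (S0 n m h)
  map_one' := rfl
  map_mul' := by
    rintro ⟨w1, h1⟩ ⟨w2, h2⟩
    show (w1 * w2).left (S0 n m h) = w1.left (S0 n m h) * w2.left (S0 n m h)
    rw [SemidirectProduct.mul_left, Pi.mul_apply, permArrow_apply, symm_S0 h1]

lemma wgen_mem_stab {n m k : ℕ} (h : n ≤ m) (i : Fin (m-1)) (hi : (i:ℕ)+1 < n) :
    wgen n k i ∈ stab n m k h := by
  show (permX n m (permGen m i)) (S0 n m h) = S0 n m h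
  apply Subtype.ext
  rw [permX_coe, permGen_eq_swap]
  exact swap_map_self ((mem_S0 h _).2 (by show (i:ℕ) < n; omega))
    ((mem_S0 h _).2 (by show (i:ℕ)+1 < n; omega))

/-- The inclusion homomorphism `B n →* B m`. -/
def iota (n m : ℕ) (hnm : n ≤ m) : B n →* B m :=
  PresentedGroup.toGroup (f := fun i : Fin (n-1) => braidGen m (i:ℕ)) <| by
    rintro r (⟨i, j, hij, rfl⟩ | ⟨i, j, hij, rfl⟩) <;>
      simp only [σrel1, σrel2, map_mul, map_inv, FreeGroup.lift_apply_of]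
    · rw [mul_inv_eq_one, mul_inv_eq_iff_eq_mul]
      exact braidGen_comm hij
    · rw [mul_inv_eq_one]
      have hj := j.isLt
      have : (i:ℕ) + 2 ≤ m - 1 := by omega
      have hb := braidGen_braid (N := m) this
      rw [hij] at hb
      exact hb

lemma iota_of (n m : ℕ) (hnm : n ≤ m) (i : Fin (n-1)) :
    iota n m hnm (PresentedGroup.of i) = braidGen m (i:ℕ) :=
  PresentedGroup.toGroup.of _

lemma iota_gen (n m : ℕ) (hnm : n ≤ m) (i : ℕ) (hi : i < n - 1) :
    iota n m hnm (braidGen n i) = braidGen m i := by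
  rw [braidGen_eq_of hi, iota_of]

lemma Phi_iota_mem_stab (n m k : ℕ) (hnm : n ≤ m) (x : B n) :
    Phi n m k (iota n m hnm x) ∈ stab n m k hnm := by
  refine PresentedGroup.generated_by _ ((stab n m k hnm).comap ((Phi n m k).comp (iota n m hnm))) ?_ x
  intro j
  have hj := j.isLt
  have hjm : (j:ℕ) < m - 1 := by omega
  show Phi n m k (iota n m hnm (PresentedGroup.of j)) ∈ stab n m k hnm
  rw [iota_of, braidGen_eq_of hjm, Phi_of]
  exact wgen_mem_stab hnm ⟨(j:ℕ), hjm⟩ (by show (j:ℕ)+1 < n; omega)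

/-- `Φ ∘ ι`, corestricted to the stabilizer. -/
def PhiIota (n m k : ℕ) (hnm : n ≤ m) : B n →* stab n m k hnm :=
  ((Phi n m k).comp (iota n m hnm)).codRestrict _ (Phi_iota_mem_stab n m k hnm)

lemma ev_PhiIota (n m k : ℕ) (hnm : n ≤ m) :
    (evS n m k hnm).comp (PhiIota n m k hnm) = QuotientGroup.mk' (gammaB n k) := by
  apply PresentedGroup.ext
  intro j
  have hj := j.isLt
  have hjm : (j:ℕ) < m - 1 := by omega
  rw [MonoidHom.comp_apply]
  show (Phi n m k (iota n m hnm (PresentedGroup.of j))).left (S0 n m hnm)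
      = QuotientGroup.mk' (gammaB n k) (PresentedGroup.of j)
  rw [iota_of, braidGen_eq_of hjm, Phi_of]
  show fgen n k ⟨(j:ℕ), hjm⟩ (S0 n m hnm) = _
  rw [fgen_apply]
  have hma : aF ⟨(j:ℕ), hjm⟩ ∈ (S0 n m hnm).1 := (mem_S0 hnm _).2 (by show (j:ℕ) < n; omega)
  have hmb : bF ⟨(j:ℕ), hjm⟩ ∈ (S0 n m hnm).1 := (mem_S0 hnm _).2 (by show (j:ℕ)+1 < n; omega)
  rw [if_pos ⟨hma, hmb⟩, rk_S0 hnm _ (by show (j:ℕ) ≤ n; omega)]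
  show Qg n k (j:ℕ) = _
  rw [Qg, braidGen_eq_of j.isLt]
  rfl

end BraidInj
namespace BraidInj
open BraidProj Finset Equiv

variable {m : ℕ}

lemma card_filter_univ_lt {N : ℕ} (t : Fin N) :
    ((Finset.univ : Finset (Fin N)).filter (· < t)).card = (t:ℕ) := by
  have hle : (t:ℕ) ≤ N := le_of_lt t.isLt
  have hfil : (Finset.univ : Finset (Fin N)).filter (· < t)
      = (Finset.univ : Finset (Fin (t:ℕ))).map (Fin.castLEEmb hle) := by
    ext x
    simp only [Finset.mem_filter, Finset.mem_univ, true_and, Finset.mem_map]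
    constructor
    · intro hxt
      exact ⟨⟨(x:ℕ), hxt⟩, by ext; rfl⟩
    · rintro ⟨y, rfl⟩
      have hy : ((Fin.castLEEmb hle y : Fin N) : ℕ) = (y:ℕ) := rfl
      have hlt : (y:ℕ) < (t:ℕ) := y.isLt
      rw [Fin.lt_def, hy]; exact hlt
  rw [hfil, Finset.card_map, Finset.card_univ, Fintype.card_fin]

/-- The increasing enumeration of an `n`-element subset of `Fin m`. -/
def enum {n : ℕ} (S : X n m) : Fin n ↪o Fin m := S.1.orderEmbOfFin S.2

lemma enum_mem {n : ℕ} (S : X n m) (t : Fin n) : enum S t ∈ S.1 :=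
  Finset.orderEmbOfFin_mem _ _ _

lemma rk_enum {n : ℕ} (S : X n m) (t : Fin n) : rk S.1 (enum S t) = (t:ℕ) := by
  unfold rk
  have hfil : S.1.filter (· < enum S t)
      = ((Finset.univ : Finset (Fin n)).filter (· < t)).map (enum S).toEmbedding := by
    ext x
    simp only [Finset.mem_filter, Finset.mem_map, Finset.mem_univ, true_and,
      RelEmbedding.coe_toEmbedding]
    constructor
    · rintro ⟨hxS, hxt⟩
      have : x ∈ Set.range (enum S) := by
        rw [enum, Finset.range_orderEmbOfFin]; exact hxS
      obtain ⟨s, rfl⟩ := this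
      exact ⟨s, (enum S).lt_iff_lt.1 hxt, rfl⟩
    · rintro ⟨s, hst, rfl⟩
      exact ⟨enum_mem S s, (enum S).lt_iff_lt.2 hst⟩
  rw [hfil, Finset.card_map, card_filter_univ_lt]

/-- The index of an element of an `n`-element subset of `Fin m`. -/
def idx {n : ℕ} (S : X n m) (a : Fin m) (ha : a ∈ S.1) : Fin n :=
  ⟨rk S.1 a, by have := rk_lt_card ha; rwa [S.2] at this⟩

lemma idx_enum {n : ℕ} (S : X n m) (t : Fin n) (h : enum S t ∈ S.1) :
    idx S (enum S t) h = t := by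
  apply Fin.ext
  exact rk_enum S t

lemma enum_idx {n : ℕ} (S : X n m) (a : Fin m) (ha : a ∈ S.1) :
    enum S (idx S a ha) = a := by
  have : a ∈ Set.range (enum S) := by
    rw [enum, Finset.range_orderEmbOfFin]; exact ha
  obtain ⟨t, rfl⟩ := this
  rw [idx_enum]

lemma permX_symm_coe {n : ℕ} (p : Equiv.Perm (Fin m)) (S : X n m) :
    ((permX n m p).symm S).1 = S.1.map p.symm.toEmbedding := rfl

lemma mem_permX_symm {n : ℕ} (p : Equiv.Perm (Fin m)) (S : X n m) (x : Fin m) :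
    x ∈ ((permX n m p).symm S).1 ↔ p x ∈ S.1 := by
  rw [permX_symm_coe, Finset.mem_map_equiv, Equiv.symm_symm]

/-- `Fin n` is equivalent to an `n`-element subset, via the increasing enumeration. -/
def sE {n : ℕ} (S : X n m) : Fin n ≃ {x // x ∈ S.1} := (S.1.orderIsoOfFin S.2).toEquiv

lemma sE_apply {n : ℕ} (S : X n m) (t : Fin n) : (sE S t : Fin m) = enum S t := rfl

lemma idx_val {n : ℕ} (S : X n m) (a : Fin m) (ha : a ∈ S.1) :
    ((idx S a ha : Fin n) : ℕ) = rk S.1 a := rfl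

lemma sE_symm {n : ℕ} (S : X n m) (a : Fin m) (ha : a ∈ S.1) :
    (sE S).symm ⟨a, ha⟩ = idx S a ha := by
  rw [Equiv.symm_apply_eq]
  exact Subtype.ext (by rw [sE_apply, enum_idx])

/-- The relabelling permutation of `Fin n` induced by `p` from `p⁻¹ • S` to `S`. -/
def Lmap {n : ℕ} (p : Equiv.Perm (Fin m)) (S : X n m) : Equiv.Perm (Fin n) :=
  ((sE ((permX n m p).symm S)).trans (p.subtypeEquiv (mem_permX_symm p S))).trans (sE S).symm

lemma Lmap_eq {n : ℕ} (p : Equiv.Perm (Fin m)) (S : X n m) (t : Fin n) :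
    Lmap p S t = idx S (p (enum ((permX n m p).symm S) t))
      ((mem_permX_symm p S _).1 (enum_mem _ t)) := by
  show (sE S).symm ((p.subtypeEquiv (mem_permX_symm p S)) (sE _ t)) = _
  have h1 : (p.subtypeEquiv (mem_permX_symm p S)) (sE ((permX n m p).symm S) t)
      = ⟨p (enum ((permX n m p).symm S) t),
          (mem_permX_symm p S _).1 (enum_mem _ t)⟩ := Subtype.ext rfl
  rw [h1, sE_symm]

/-- The homomorphism recording how permutations of `Fin m` permute `n`-element subsets
and relabel their elements. -/
def eta (n : ℕ) (m : ℕ) :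
    Equiv.Perm (Fin m) →* ((X n m → Equiv.Perm (Fin n)) ⋊[permArrow] Equiv.Perm (X n m)) where
  toFun p := ⟨fun S => Lmap p S, permX n m p⟩
  map_one' := by
    apply sdp_eq
    · show (fun S => Lmap 1 S) = 1
      funext S
      apply Equiv.ext
      intro t
      show Lmap 1 S t = t
      rw [Lmap_eq]
      apply Fin.ext
      rw [idx_val]
      have hS : (permX n m 1).symm S = S := by rw [map_one]; rfl
      rw [show ((1 : Equiv.Perm (Fin m)) (enum ((permX n m 1).symm S) t))
          = enum ((permX n m 1).symm S) t from rfl, hS, rk_enum]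
    · show permX n m 1 = 1
      rw [map_one]
  map_mul' p q := by
    apply sdp_eq
    · show (fun S => Lmap (p*q) S)
        = (fun S => Lmap p S) * permArrow (permX n m p) (fun S => Lmap q S)
      funext S
      apply Equiv.ext
      intro t
      rw [Pi.mul_apply, permArrow_apply, Equiv.Perm.mul_apply]
      rw [Lmap_eq, Lmap_eq, Lmap_eq]
      apply Fin.ext
      rw [idx_val, idx_val, enum_idx]
      have hT : (permX n m (p*q)).symm S
          = (permX n m q).symm ((permX n m p).symm S) := by
        rw [map_mul, perm_mul_symm]
      rw [hT, Equiv.Perm.mul_apply]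
    · show permX n m (p*q) = permX n m p * permX n m q
      rw [map_mul]

end BraidInj
namespace BraidInj
open BraidProj Finset Equiv

variable {m : ℕ}

lemma braidpibar_Qg (n k : ℕ) {r : ℕ} (h : r < n - 1) :
    braidπbar n k (Qg n k r) = permGen n ⟨r, h⟩ := by
  show braidπ n (braidGen n r) = _
  rw [braidGen_eq_of h, braidpi_of]

lemma swap_lt_swap_left {a b x y : Fin m} (hv : (b:ℕ) = (a:ℕ)+1)
    (hxa : x ≠ a) (hya : y ≠ a) (hxy : x < y) :
    Equiv.swap a b x < Equiv.swap a b y := by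
  by_cases hxb : x = b
  · subst hxb
    rw [Equiv.swap_apply_right, Equiv.swap_apply_of_ne_of_ne hya (ne_of_gt hxy)]
    rw [Fin.lt_def] at *
    omega
  · by_cases hyb : y = b
    · subst hyb
      rw [Equiv.swap_apply_right, Equiv.swap_apply_of_ne_of_ne hxa hxb]
      have h1 : (x:ℕ) ≠ (a:ℕ) := fun h => hxa (Fin.ext h)
      rw [Fin.lt_def] at *
      omega
    · rw [Equiv.swap_apply_of_ne_of_ne hxa hxb, Equiv.swap_apply_of_ne_of_ne hya hyb]
      exact hxy

lemma swap_lt_swap_right {a b x y : Fin m} (hv : (b:ℕ) = (a:ℕ)+1)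
    (hxb : x ≠ b) (hyb : y ≠ b) (hxy : x < y) :
    Equiv.swap a b x < Equiv.swap a b y := by
  by_cases hxa : x = a
  · subst hxa
    rw [Equiv.swap_apply_left, Equiv.swap_apply_of_ne_of_ne (ne_of_gt hxy) hyb]
    have h1 : (y:ℕ) ≠ (b:ℕ) := fun h => hyb (Fin.ext h)
    rw [Fin.lt_def] at *
    omega
  · by_cases hya : y = a
    · subst hya
      rw [Equiv.swap_apply_left, Equiv.swap_apply_of_ne_of_ne hxa hxb]
      rw [Fin.lt_def] at *
      omega
    · rw [Equiv.swap_apply_of_ne_of_ne hxa hxb, Equiv.swap_apply_of_ne_of_ne hya hyb]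
      exact hxy

lemma braidpibar_fgen (n k : ℕ) (i : Fin (m-1)) (S : X n m) :
    braidπbar n k (fgen n k i S) = Lmap (permGen m i) S := by
  have hi := i.isLt
  have hv : ((bF i : Fin m):ℕ) = ((aF i : Fin m):ℕ) + 1 := rfl
  have hab : aF i < bF i := by rw [Fin.lt_def]; omega
  have hTmem : ∀ x : Fin m, x ∈ ((permX n m (permGen m i)).symm S).1
      ↔ Equiv.swap (aF i) (bF i) x ∈ S.1 := by
    intro x
    rw [mem_permX_symm, permGen_eq_swap]
  rw [fgen_apply]
  by_cases hmem : aF i ∈ S.1 ∧ bF i ∈ S.1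
  · obtain ⟨ha, hb⟩ := hmem
    rw [if_pos ⟨ha, hb⟩]
    have hr2 : rk S.1 (aF i) + 2 ≤ n := by
      have := rk_pair ha hb hab
      rwa [S.2] at this
    have hrn : rk S.1 (aF i) < n - 1 := by omega
    rw [braidpibar_Qg n k hrn]
    have hT : (permX n m (permGen m i)).symm S = S := by
      apply Subtype.ext
      rw [permX_symm_coe, permGen_eq_swap, Equiv.symm_swap]
      exact swap_map_self ha hb
    apply Equiv.ext
    intro t
    rw [Lmap_eq]
    apply Fin.ext
    rw [idx_val, hT, permGen_eq_swap, permGen_eq_swap]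
    have hrka : rk S.1 (bF i) = rk S.1 (aF i) + 1 := by
      rw [rk_adj hv, if_pos ha]
    have hvA : ((aF (⟨rk S.1 (aF i), hrn⟩ : Fin (n-1)) : Fin n) : ℕ) = rk S.1 (aF i) := rfl
    have hvB : ((bF (⟨rk S.1 (aF i), hrn⟩ : Fin (n-1)) : Fin n) : ℕ) = rk S.1 (aF i) + 1 := rfl
    rcases Nat.lt_trichotomy (t:ℕ) (rk S.1 (aF i)) with ht | ht | ht
    · -- t below: fixed on both sides
      have h1 : enum S t ≠ aF i := fun h => by
        have := congrArg (rk S.1) h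
        rw [rk_enum] at this
        omega
      have h2 : enum S t ≠ bF i := fun h => by
        have := congrArg (rk S.1) h
        rw [rk_enum, hrka] at this
        omega
      rw [Equiv.swap_apply_of_ne_of_ne h1 h2, rk_enum,
        Equiv.swap_apply_of_ne_of_ne (fun h => by
          have := congrArg (Fin.val) h; rw [hvA] at this; omega)
          (fun h => by have := congrArg (Fin.val) h; rw [hvB] at this; omega)]
    · -- t = rank of a
      have h1 : t = idx S (aF i) ha := Fin.ext (by rw [idx_val]; exact ht)
      rw [show enum S t = aF i from by rw [h1, enum_idx], Equiv.swap_apply_left, hrka,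
        show (t : Fin n) = aF (⟨rk S.1 (aF i), hrn⟩ : Fin (n-1)) from
          Fin.ext (by rw [hvA]; exact ht), Equiv.swap_apply_left, hvB]
    · -- t = rank of b (or above)
      rcases Nat.eq_or_lt_of_le ht with ht' | ht'
      · have h1 : t = idx S (bF i) hb := Fin.ext (by rw [idx_val, hrka]; omega)
        rw [show enum S t = bF i from by rw [h1, enum_idx], Equiv.swap_apply_right,
          show (t : Fin n) = bF (⟨rk S.1 (aF i), hrn⟩ : Fin (n-1)) from
            Fin.ext (by rw [hvB]; omega), Equiv.swap_apply_right, hvA]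
      · have h1 : enum S t ≠ aF i := fun h => by
          have := congrArg (rk S.1) h
          rw [rk_enum] at this
          omega
        have h2 : enum S t ≠ bF i := fun h => by
          have := congrArg (rk S.1) h
          rw [rk_enum, hrka] at this
          omega
        rw [Equiv.swap_apply_of_ne_of_ne h1 h2, rk_enum,
          Equiv.swap_apply_of_ne_of_ne (fun h => by
            have := congrArg (Fin.val) h; rw [hvA] at this; omega)
            (fun h => by have := congrArg (Fin.val) h; rw [hvB] at this; omega)]
  · rw [if_neg hmem, map_one]
    have hmono : StrictMono (fun t : Fin n =>
        Equiv.swap (aF i) (bF i) (enum ((permX n m (permGen m i)).symm S) t)) := by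
      intro t u htu
      have het : enum _ t ∈ ((permX n m (permGen m i)).symm S).1 := enum_mem _ t
      have heu : enum _ u ∈ ((permX n m (permGen m i)).symm S).1 := enum_mem _ u
      have hlt : enum ((permX n m (permGen m i)).symm S) t
          < enum ((permX n m (permGen m i)).symm S) u := (enum _).lt_iff_lt.2 htu
      by_cases ha : aF i ∈ S.1
      · have hbn : bF i ∉ S.1 := fun hb => hmem ⟨ha, hb⟩
        have hTa : aF i ∉ ((permX n m (permGen m i)).symm S).1 := by
          rw [hTmem, Equiv.swap_apply_left]; exact hbn
        exact swap_lt_swap_left hv (fun h => hTa (h ▸ het)) (fun h => hTa (h ▸ heu)) hlt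
      · have hTb : bF i ∉ ((permX n m (permGen m i)).symm S).1 := by
          rw [hTmem, Equiv.swap_apply_right]; exact ha
        exact swap_lt_swap_right hv (fun h => hTb (h ▸ het)) (fun h => hTb (h ▸ heu)) hlt
    have hgmem : ∀ t : Fin n, Equiv.swap (aF i) (bF i)
        (enum ((permX n m (permGen m i)).symm S) t) ∈ S.1 := fun t =>
      (hTmem _).1 (enum_mem _ t)
    have hfun := Finset.orderEmbOfFin_unique S.2 hgmem hmono
    apply (Equiv.ext ?_).symm
    intro t
    show Lmap (permGen m i) S t = t
    rw [Lmap_eq]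
    apply Fin.ext
    rw [idx_val]
    have h2 : permGen m i (enum ((permX n m (permGen m i)).symm S) t)
        = enum S t := by
      rw [permGen_eq_swap]
      exact congrFun hfun t
    rw [h2]
    exact rk_enum S t

/-- Applying `braidπbar` componentwise. -/
def Wmap (n m k : ℕ) :
    WW n m k →* ((X n m → Equiv.Perm (Fin n)) ⋊[permArrow] Equiv.Perm (X n m)) where
  toFun w := ⟨fun S => braidπbar n k (w.left S), w.right⟩
  map_one' := by
    apply sdp_eq
    · funext S
      show braidπbar n k ((1 : WW n m k).left S) = (1 : X n m → Equiv.Perm (Fin n)) S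
      rw [SemidirectProduct.one_left]
      show braidπbar n k 1 = 1
      rw [map_one]
    · rfl
  map_mul' w1 w2 := by
    apply sdp_eq
    · show (fun S => braidπbar n k ((w1*w2).left S))
        = (fun S => braidπbar n k (w1.left S))
          * permArrow w1.right (fun S => braidπbar n k (w2.left S))
      funext S
      rw [Pi.mul_apply, permArrow_apply, SemidirectProduct.mul_left, Pi.mul_apply,
        map_mul, permArrow_apply]
    · rfl

lemma theta_eq (n m k : ℕ) :
    (Wmap n m k).comp (Phi n m k) = (eta n m).comp (braidπ m) := by
  apply PresentedGroup.ext
  intro i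
  rw [MonoidHom.comp_apply, MonoidHom.comp_apply, Phi_of, braidpi_of]
  apply sdp_eq
  · show (fun S => braidπbar n k ((wgen n k i).left S)) = fun S => Lmap (permGen m i) S
    funext S
    rw [wgen_left]
    exact braidpibar_fgen n k i S
  · rfl

end BraidInj
namespace BraidInj
open BraidProj Finset Equiv

lemma lcs_le_map_of_surjective {G H : Type*} [Group G] [Group H] (f : G →* H)
    (hf : Function.Surjective f) :
    ∀ j, (⊤ : Subgroup H).lowerCentralSeries j ≤ ((⊤ : Subgroup G).lowerCentralSeries j).map f := by
  intro j
  induction j with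
  | zero =>
    intro x _
    obtain ⟨y, rfl⟩ := hf x
    exact Subgroup.mem_map_of_mem f (Subgroup.mem_top y)
  | succ j ih =>
    rw [Subgroup.lowerCentralSeries_succ, Subgroup.commutator_def]
    apply (Subgroup.closure_le _).2
    rintro x ⟨p, hp, q, -, rfl⟩
    obtain ⟨p', hp', rfl⟩ := ih hp
    obtain ⟨q', rfl⟩ := hf q
    refine ⟨p' * q' * p'⁻¹ * q'⁻¹, ?_, by simp [commutatorElement_def]⟩
    rw [Subgroup.lowerCentralSeries_succ, Subgroup.commutator_def]
    exact Subgroup.subset_closure ⟨p', hp', q', Subgroup.mem_top q', rfl⟩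

lemma viaEmbedding_swap {α β : Type*} [DecidableEq α] [DecidableEq β]
    (f : α ↪ β) (x y : α) :
    (Equiv.swap x y).viaEmbedding f = Equiv.swap (f x) (f y) := by
  apply Equiv.ext
  intro z
  by_cases hz : z ∈ Set.range f
  · obtain ⟨w, rfl⟩ := hz
    rw [Equiv.Perm.viaEmbedding_apply]
    by_cases hwx : w = x
    · subst hwx; rw [Equiv.swap_apply_left, Equiv.swap_apply_left]
    by_cases hwy : w = y
    · subst hwy; rw [Equiv.swap_apply_right, Equiv.swap_apply_right]
    · rw [Equiv.swap_apply_of_ne_of_ne hwx hwy, Equiv.swap_apply_of_ne_of_ne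
        (fun h => hwx (f.injective h)) (fun h => hwy (f.injective h))]
  · rw [Equiv.Perm.viaEmbedding_apply_of_notMem _ _ _ hz,
      Equiv.swap_apply_of_ne_of_ne (fun h => hz ⟨x, h.symm⟩) (fun h => hz ⟨y, h.symm⟩)]

/-- The embedding of `S_n` into `S_m`. -/
noncomputable def permEmb (n m : ℕ) (hnm : n ≤ m) :
    Equiv.Perm (Fin n) →* Equiv.Perm (Fin m) :=
  Equiv.Perm.viaEmbeddingHom (Fin.castLEEmb hnm)

lemma braidpi_iota (n m : ℕ) (hnm : n ≤ m) :
    (braidπ m).comp (iota n m hnm) = (permEmb n m hnm).comp (braidπ n) := by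
  apply PresentedGroup.ext
  intro i
  have hi := i.isLt
  have him : (i:ℕ) < m - 1 := by omega
  rw [MonoidHom.comp_apply, MonoidHom.comp_apply, iota_of, braidGen_eq_of him,
    braidpi_of, braidpi_of, permGen_eq_swap, permGen_eq_swap, permEmb,
    Equiv.Perm.viaEmbeddingHom_apply, viaEmbedding_swap]
  congr 1 <;> apply Fin.ext <;> rfl

lemma iota_mem_P (n m : ℕ) (hnm : n ≤ m) {x : B n} (hx : x ∈ P n) :
    iota n m hnm x ∈ P m := by
  have h := DFunLike.congr_fun (braidpi_iota n m hnm) x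
  rw [MonoidHom.comp_apply, MonoidHom.comp_apply] at h
  show braidπ m (iota n m hnm x) = 1
  rw [h, show braidπ n x = 1 from hx, map_one]

/-- `ι` restricted to pure braid groups. -/
noncomputable def iotaP (n m : ℕ) (hnm : n ≤ m) : P n →* P m :=
  ((iota n m hnm).comp (P n).subtype).codRestrict _ (fun x => iota_mem_P n m hnm x.2)

lemma iota_gammaB_le (n m k : ℕ) (hnm : n ≤ m) :
    gammaB n k ≤ (gammaB m k).comap (iota n m hnm) := by
  rintro g ⟨y, hy, rfl⟩
  show iota n m hnm ((P n).subtype y) ∈ gammaB m k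
  have h1 : iota n m hnm ((P n).subtype y) = (P m).subtype (iotaP n m hnm y) := rfl
  rw [h1]
  exact Subgroup.mem_map_of_mem _
    (Subgroup.lowerCentralSeries.map (iotaP n m hnm) (k-1) (Subgroup.mem_map_of_mem _ hy))

lemma Phi_mem_stab_of_P (n m k : ℕ) (hnm : n ≤ m) {y : B m} (hy : y ∈ P m) :
    Phi n m k y ∈ stab n m k hnm := by
  show (Phi n m k y).right (S0 n m hnm) = S0 n m hnm
  have h := DFunLike.congr_fun (rightHom_Phi n m k) y
  rw [MonoidHom.comp_apply, MonoidHom.comp_apply] at h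
  have h2 : (Phi n m k y).right = permX n m (braidπ m y) := h
  rw [h2, show braidπ m y = 1 from hy, map_one]
  rfl

/-- The retraction-like homomorphism from `P m` into the quotient. -/
noncomputable def psi (n m k : ℕ) (hnm : n ≤ m) : P m →* B n ⧸ gammaB n k :=
  (evS n m k hnm).comp
    (((Phi n m k).comp (P m).subtype).codRestrict _
      (fun y => Phi_mem_stab_of_P n m k hnm y.2))

lemma psi_apply (n m k : ℕ) (hnm : n ≤ m) (y : P m) :
    psi n m k hnm y = (Phi n m k ((P m).subtype y)).left (S0 n m hnm) := rfl

lemma braidpibar_psi (n m k : ℕ) (hnm : n ≤ m) (y : P m) :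
    braidπbar n k (psi n m k hnm y) = 1 := by
  rw [psi_apply]
  have h1 : braidπbar n k ((Phi n m k ((P m).subtype y)).left (S0 n m hnm))
      = ((Wmap n m k) (Phi n m k ((P m).subtype y))).left (S0 n m hnm) := rfl
  have h2 := DFunLike.congr_fun (theta_eq n m k) ((P m).subtype y)
  rw [MonoidHom.comp_apply, MonoidHom.comp_apply] at h2
  rw [h1, h2, show braidπ m ((P m).subtype y) = 1 from y.2, map_one]
  rfl

/-- `ψ`, corestricted to the kernel of the projection to `S_n`. -/
noncomputable def psiK (n m k : ℕ) (hnm : n ≤ m) : P m →* (braidπbar n k).ker :=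
  (psi n m k hnm).codRestrict _ (fun y => braidpibar_psi n m k hnm y)

/-- The projection of `P n` onto the kernel of `braidπbar`. -/
def rho (n k : ℕ) : P n →* (braidπbar n k).ker :=
  ((QuotientGroup.mk' (gammaB n k)).comp (P n).subtype).codRestrict _
    (fun x => by
      show braidπbar n k (QuotientGroup.mk' (gammaB n k) ((P n).subtype x)) = 1
      have : braidπbar n k (QuotientGroup.mk' (gammaB n k) ((P n).subtype x))
          = braidπ n ((P n).subtype x) := rfl
      rw [this]
      exact x.2)

lemma rho_surjective (n k : ℕ) : Function.Surjective (rho n k) := by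
  rintro ⟨q, hq⟩
  obtain ⟨x, rfl⟩ := QuotientGroup.mk'_surjective (gammaB n k) q
  have hx : x ∈ P n := by
    show braidπ n x = 1
    exact hq
  exact ⟨⟨x, hx⟩, rfl⟩

lemma lcs_ker_braidpibar (n k : ℕ) (hk : 1 ≤ k) :
    (⊤ : Subgroup (braidπbar n k).ker).lowerCentralSeries (k-1) = ⊥ := by
  rw [eq_bot_iff]
  intro x hx
  obtain ⟨y, hy, rfl⟩ := lcs_le_map_of_surjective (rho n k) (rho_surjective n k) (k-1) hx
  have : (P n).subtype y ∈ gammaB n k := Subgroup.mem_map_of_mem _ hy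
  show rho n k y = 1
  apply Subtype.ext
  show QuotientGroup.mk' (gammaB n k) ((P n).subtype y) = 1
  rw [QuotientGroup.mk'_apply, QuotientGroup.eq_one_iff]
  exact this

end BraidInj

open BraidProj in
/-- For `k ≥ 1` and `2 ≤ n ≤ m`, the homomorphism `ι : B_n → B_m` defined by
`ι(σ_i) = σ_i` maps `Γ_k(P_n)` into `Γ_k(P_m)`, and the induced homomorphism
`B_n/Γ_k(P_n) → B_m/Γ_k(P_m)` is injective. -/
theorem inclusion_induces_injective (k : ℕ) (hk : 1 ≤ k) (n m : ℕ)
    (hn : 2 ≤ n) (hnm : n ≤ m) :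
    ∃ ι : B n →* B m,
      (∀ i : ℕ, i < n - 1 → ι (braidGen n i) = braidGen m i) ∧
      ∃ h : gammaB n k ≤ (gammaB m k).comap ι,
        Function.Injective (QuotientGroup.map (gammaB n k) (gammaB m k) ι h) := by
  refine ⟨BraidInj.iota n m hnm, fun i hi => BraidInj.iota_gen n m hnm i hi,
    BraidInj.iota_gammaB_le n m k hnm, ?_⟩
  rw [injective_iff_map_eq_one]
  intro q hq
  obtain ⟨x, rfl⟩ := QuotientGroup.mk'_surjective (gammaB n k) q
  rw [QuotientGroup.map_mk', QuotientGroup.eq_one_iff] at hq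
  obtain ⟨y, hy, hyx⟩ := hq
  have h1 : BraidInj.psiK n m k hnm y ∈
      (⊤ : Subgroup (braidπbar n k).ker).lowerCentralSeries (k-1) :=
    Subgroup.lowerCentralSeries.map (BraidInj.psiK n m k hnm) (k-1)
      (Subgroup.mem_map_of_mem _ hy)
  rw [BraidInj.lcs_ker_braidpibar n k hk, Subgroup.mem_bot] at h1
  have h2 : BraidInj.psi n m k hnm y = 1 := congrArg Subtype.val h1
  rw [BraidInj.psi_apply, hyx] at h2
  have h4 := DFunLike.congr_fun (BraidInj.ev_PhiIota n m k hnm) x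
  rw [MonoidHom.comp_apply] at h4
  have h5 : BraidInj.evS n m k hnm (BraidInj.PhiIota n m k hnm x)
      = (BraidInj.Phi n m k (BraidInj.iota n m hnm x)).left (BraidInj.S0 n m hnm) := rfl
  rw [h5, h2] at h4
  exact h4.symm
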